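/- For every n ≥ 1, the sum of â(t) over all trees t of degree n in the free magma M equals ω(n). -/

import Mathlib

def deg : FreeMagma Unit → ℕ
  | FreeMagma.of _ => 1
  | FreeMagma.mul t₁ t₂ => deg t₁ + deg t₂

def expCoeff : FreeMagma Unit → ℚ
  | FreeMagma.of _ => 1
  | FreeMagma.mul t₁ t₂ =>
      expCoeff t₁ * expCoeff t₂ / (2 ^ (deg (FreeMagma.mul t₁ t₂)) - 2)

/-- Mersenne factorial. -/
def mersenneFact (m : ℕ) : ℕ := ∏ i ∈ Finset.Icc 1 m, (2 ^ i - 1)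

/-- Mersenne binomial coefficient, as a rational number. -/
def mersenneBinom (n r : ℕ) : ℚ :=
  (mersenneFact n : ℚ) / ((mersenneFact r : ℚ) * (mersenneFact (n - r) : ℚ))

def omegaQ (n : ℕ) : ℚ := 2 ^ (n - 1) * (mersenneFact (n - 1) : ℚ) / (n.factorial : ℚ)

/-- `â(t) = n! · ω(n) · a(t)` where `n = deg t`. -/
def ahat (t : FreeMagma Unit) : ℚ :=
  ((deg t).factorial : ℚ) * omegaQ (deg t) * expCoeff t

lemma deg_mul (a b : FreeMagma Unit) : deg (FreeMagma.mul a b) = deg a + deg b := rfl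

lemma deg_pos (t : FreeMagma Unit) : 1 ≤ deg t := by
  induction t with
  | ih1 _ => simp [deg]
  | ih2 a b ha hb => show 1 ≤ deg (FreeMagma.mul a b); rw [deg_mul]; omega

/-- The finset of trees of degree `n` (empty for `n = 0`). -/
def Tset : ℕ → Finset (FreeMagma Unit)
  | 0 => ∅
  | 1 => {FreeMagma.of ()}
  | (n+2) => (Finset.range (n+1)).attach.biUnion fun k =>
      ((Tset (k.1+1)) ×ˢ (Tset (n+1-k.1))).image fun p => FreeMagma.mul p.1 p.2
  decreasing_by
  all_goals (have := k.2; simp only [Finset.mem_range] at this; omega)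

lemma mem_Tset_deg : ∀ n, ∀ t ∈ Tset n, deg t = n := by
  intro n
  induction n using Nat.strong_induction_on with
  | _ n ih =>
    match n with
    | 0 => simp [Tset]
    | 1 => intro t ht; simp [Tset] at ht; subst ht; rfl
    | (m+2) =>
      intro t ht
      rw [Tset] at ht
      simp only [Finset.mem_biUnion, Finset.mem_image, Finset.mem_product,
        Finset.mem_attach, true_and] at ht
      obtain ⟨k, p, ⟨h1, h2⟩, rfl⟩ := ht
      have hk := Finset.mem_range.mp k.2
      have d1 := ih (k.1+1) (by omega) _ h1
      have d2 := ih (m+1-k.1) (by omega) _ h2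
      rw [deg_mul, d1, d2]; omega

lemma deg_mem_Tset : ∀ t : FreeMagma Unit, t ∈ Tset (deg t) := by
  intro t
  induction t with
  | ih1 _ => simp [deg, Tset]
  | ih2 a b ha hb =>
    have h1 := deg_pos a
    have h2 := deg_pos b
    have hform : deg (FreeMagma.mul a b) = (deg a + deg b - 2) + 2 := by
      simp [deg]; omega
    show FreeMagma.mul a b ∈ Tset (deg (FreeMagma.mul a b))
    rw [hform]
    set m := deg a + deg b - 2 with hm
    rw [Tset]
    simp only [Finset.mem_biUnion, Finset.mem_image, Finset.mem_product,
      Finset.mem_attach, true_and]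
    refine ⟨⟨deg a - 1, ?_⟩, ⟨(a, b), ⟨?_, ?_⟩, rfl⟩⟩
    · simp [Finset.mem_range]; omega
    · have : deg a - 1 + 1 = deg a := by omega
      rw [this]; exact ha
    · have : m + 1 - (deg a - 1) = deg b := by omega
      rw [this]; exact hb

lemma mem_Tset_iff {n : ℕ} (hn : 1 ≤ n) (t : FreeMagma Unit) :
    t ∈ Tset n ↔ deg t = n := by
  constructor
  · exact mem_Tset_deg n t
  · rintro rfl; exact deg_mem_Tset t

lemma choose_sum_aux (n : ℕ) :
    ∑ k ∈ Finset.range (n+1), (n+2).choose (k+1) = 2^(n+2) - 2 := by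
  have h := Nat.sum_range_choose (n+2)
  have h1 : ∑ i ∈ Finset.range (n+2+1), (n+2).choose i
      = (n+2).choose 0 + ∑ k ∈ Finset.range (n+2), (n+2).choose (k+1) := by
    rw [Finset.sum_range_succ' (fun i => (n+2).choose i) (n+2)]
    ring
  have h2 : ∑ k ∈ Finset.range (n+2), (n+2).choose (k+1)
      = ∑ k ∈ Finset.range (n+1), (n+2).choose (k+1) + (n+2).choose (n+2) := by
    rw [Finset.sum_range_succ]
  have hpow : 2 ≤ 2^(n+2) := by
    calc 2 ≤ 2^1 := by norm_num
    _ ≤ 2^(n+2) := Nat.pow_le_pow_right (by norm_num) (by omega)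
  rw [Nat.choose_zero_right] at h1
  rw [Nat.choose_self] at h2
  omega

lemma conv_sum (n : ℕ) :
    ∑ k ∈ Finset.range (n+1),
      ((1 : ℚ) / (k+1).factorial) * ((1 : ℚ) / (n+1-k).factorial)
      = ((2:ℚ)^(n+2) - 2) / (n+2).factorial := by
  have key : ∀ k ∈ Finset.range (n+1),
      ((1 : ℚ) / (k+1).factorial) * ((1 : ℚ) / (n+1-k).factorial)
      = ((n+2).choose (k+1) : ℚ) / (n+2).factorial := by
    intro k hk
    simp only [Finset.mem_range] at hk
    have hle : k+1 ≤ n+2 := by omega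
    have := Nat.choose_mul_factorial_mul_factorial hle
    have hsub : n + 2 - (k+1) = n+1-k := by omega
    rw [hsub] at this
    have f1 : ((k+1).factorial : ℚ) ≠ 0 := by positivity
    have f2 : ((n+1-k).factorial : ℚ) ≠ 0 := by positivity
    have f3 : ((n+2).factorial : ℚ) ≠ 0 := by positivity
    rw [mul_assoc] at this
    field_simp
    exact_mod_cast this.symm.trans (mul_comm _ _)
  rw [Finset.sum_congr rfl key, ← Finset.sum_div]
  congr 1
  rw [← Nat.cast_sum, choose_sum_aux]
  have hpow : 2 ≤ 2^(n+2) := by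
    calc 2 ≤ 2^1 := by norm_num
    _ ≤ 2^(n+2) := Nat.pow_le_pow_right (by norm_num) (by omega)
  push_cast [Nat.cast_sub hpow]
  ring

lemma sum_expCoeff : ∀ n, 1 ≤ n → ∑ t ∈ Tset n, expCoeff t = 1 / n.factorial := by
  intro n
  induction n using Nat.strong_induction_on with
  | _ n ih =>
    match n with
    | 0 => intro h; omega
    | 1 => intro _; simp [Tset, expCoeff]
    | (m+2) =>
      intro _
      rw [Tset, Finset.sum_biUnion]
      · have inner : ∀ k : {x // x ∈ Finset.range (m+1)},
            ∑ t ∈ ((Tset (k.1+1)) ×ˢ (Tset (m+1-k.1))).image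
              (fun p => FreeMagma.mul p.1 p.2), expCoeff t
            = ((1:ℚ) / (k.1+1).factorial) * ((1:ℚ) / (m+1-k.1).factorial)
              / ((2:ℚ)^(m+2) - 2) := by
          intro k
          have hk := Finset.mem_range.mp k.2
          rw [Finset.sum_image]
          · have hval : ∀ p ∈ (Tset (k.1+1)) ×ˢ (Tset (m+1-k.1)),
                expCoeff (FreeMagma.mul p.1 p.2)
                = expCoeff p.1 * expCoeff p.2 / ((2:ℚ)^(m+2) - 2) := by
              intro p hp
              simp only [Finset.mem_product] at hp
              have d1 := mem_Tset_deg _ _ hp.1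
              have d2 := mem_Tset_deg _ _ hp.2
              rw [expCoeff]
              have : deg (FreeMagma.mul p.1 p.2) = m+2 := by simp [deg, d1, d2]; omega
              rw [this]
            rw [Finset.sum_congr rfl hval]
            rw [← Finset.sum_div]
            rw [Finset.sum_product]
            have e1 := ih (k.1+1) (by omega) (by omega)
            have e2 := ih (m+1-k.1) (by omega) (by omega)
            simp only [← Finset.sum_mul, ← Finset.mul_sum, e1, e2]
          · intro p _ q _ hpq
            have : p.1 = q.1 ∧ p.2 = q.2 := by injection hpq with h1 h2; exact ⟨h1, h2⟩
            ext <;> simp [this.1, this.2]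
        rw [Finset.sum_congr rfl (fun k _ => inner k)]
        rw [Finset.sum_attach (Finset.range (m+1))
          (fun k => ((1:ℚ) / (k+1).factorial) * ((1:ℚ) / (m+1-k).factorial)
            / ((2:ℚ)^(m+2) - 2))]
        rw [← Finset.sum_div, conv_sum]
        have hne : (2:ℚ)^(m+2) - 2 ≠ 0 := by
          have : (4:ℚ) ≤ 2^(m+2) := by
            calc (4:ℚ) = 2^2 := by norm_num
            _ ≤ 2^(m+2) := by
              apply pow_le_pow_right₀ (by norm_num); omega
          linarith
        field_simp
      · intro k _ k' _ hkk'
        simp only [Finset.disjoint_left, Finset.mem_image, Finset.mem_product]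
        rintro t ⟨p, ⟨hp1, hp2⟩, rfl⟩ ⟨q, ⟨hq1, hq2⟩, habs⟩
        have : p.1 = q.1 ∧ p.2 = q.2 := by injection habs.symm with h1 h2; exact ⟨h1, h2⟩
        have d1 := mem_Tset_deg _ _ hp1
        have d2 := mem_Tset_deg _ _ hq1
        rw [this.1] at d1
        apply hkk'
        ext
        omega

theorem sum_ahat_eq_omega (n : ℕ) (hn : 1 ≤ n) :
    ∑ᶠ t ∈ {t : FreeMagma Unit | deg t = n}, ahat t = omegaQ n := by
  have hset : {t : FreeMagma Unit | deg t = n} = ↑(Tset n) := by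
    ext t
    simp [mem_Tset_iff hn]
  rw [hset, finsum_mem_coe_finset]
  have hval : ∀ t ∈ Tset n, ahat t = (n.factorial : ℚ) * omegaQ n * expCoeff t := by
    intro t ht
    have := mem_Tset_deg _ _ ht
    simp [ahat, this]
  rw [Finset.sum_congr rfl hval, ← Finset.mul_sum, sum_expCoeff n hn]
  have : (n.factorial : ℚ) ≠ 0 := by positivity
  field_simp
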